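/- Let d ≥ 2 and work in ℂ^d ⊗ ℂ^d. The linear span S_{P,0,∞} of the Parthasarathy space S_P together with z₀ and z_∞ contains infinitely many distinct one-dimensional subspaces spanned by product vectors; explicitly, for every a ∈ ℂ, the product vector (|0⟩ + a|d−1⟩) ⊗ (|0⟩ − a|d−1⟩) lies in S_{P,0,∞}. In particular, S_{P,0,∞} is not a quasi-completely entangled subspace. -/

import Mathlib

noncomputable section

/-- the Hilbert space ℂ^d ⊗ ℂ^d, realized as ℂ^{d²} -/
abbrev Hdd (d : ℕ) : Type := EuclideanSpace ℂ (Fin d × Fin d)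

/-- elementary tensor u ⊗ v of two vectors of ℂ^d -/
def tpdd (d : ℕ) (u v : EuclideanSpace ℂ (Fin d)) : Hdd d := WithLp.toLp 2 (fun p : Fin d × Fin d => u p.1 * v p.2)

/-- the vector Σ_s λ^s |s⟩ of ℂ^d -/
def vandd (d : ℕ) (lam : ℂ) : EuclideanSpace ℂ (Fin d) := WithLp.toLp 2 (fun s : Fin d => lam ^ (s : ℕ))

/-- the van der Monde vector z_λ -/
def zdd (d : ℕ) (lam : ℂ) : Hdd d := tpdd d (vandd d lam) (vandd d lam)

/-- the vector |0⟩ of ℂ^d -/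
def firstd (d : ℕ) : EuclideanSpace ℂ (Fin d) := WithLp.toLp 2 (fun s : Fin d => if (s : ℕ) = 0 then 1 else 0)

/-- the vector |d−1⟩ of ℂ^d -/
def lastd (d : ℕ) : EuclideanSpace ℂ (Fin d) := WithLp.toLp 2 (fun s : Fin d => if (s : ℕ) = d - 1 then 1 else 0)

/-- the van der Monde vector z_∞ = |d−1⟩ ⊗ |d−1⟩ -/
def zddinf (d : ℕ) : Hdd d := tpdd d (lastd d) (lastd d)

/-- the span of all van der Monde vectors -/
def Fdd (d : ℕ) : Submodule ℂ (Hdd d) :=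
  Submodule.span ℂ (insert (zddinf d) (Set.range (zdd d)))

/-- the Parthasarathy completely entangled subspace of ℂ^d ⊗ ℂ^d -/
def SPdd (d : ℕ) : Submodule ℂ (Hdd d) := (Fdd d)ᗮ

/-- the double perturbation of `S_P` by `z₀` and `z_∞` -/
def SP0inf (d : ℕ) : Submodule ℂ (Hdd d) :=
  SPdd d ⊔ Submodule.span ℂ {zdd d 0} ⊔ Submodule.span ℂ {zddinf d}

/-- the set of one-dimensional subspaces of `T` spanned by (nonzero) product vectors -/
def prodLinesdd (d : ℕ) (T : Submodule ℂ (Hdd d)) : Set (Submodule ℂ (Hdd d)) :=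
  {L | ∃ ξ : Hdd d, ξ ≠ 0 ∧ ξ ∈ T ∧ (∃ u v, ξ = tpdd d u v) ∧ L = Submodule.span ℂ {ξ}}

open scoped InnerProductSpace ComplexConjugate

lemma inner_tpdd (d : ℕ) (u v x y : EuclideanSpace ℂ (Fin d)) :
    ⟪tpdd d u v, tpdd d x y⟫_ℂ = ⟪u, x⟫_ℂ * ⟪v, y⟫_ℂ := by
  simp only [PiLp.inner_apply, RCLike.inner_apply, tpdd, PiLp.toLp_apply, Finset.sum_mul_sum,
    Fintype.sum_prod_type, map_mul]
  congr 1; ext i; congr 1; ext j; ring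

lemma inner_single (d k : ℕ) (h : k < d) (w : EuclideanSpace ℂ (Fin d)) :
    ⟪w, (WithLp.toLp 2 (fun s : Fin d => if (s : ℕ) = k then 1 else 0) : EuclideanSpace ℂ (Fin d))⟫_ℂ
      = conj (w ⟨k, h⟩) := by
  simp only [PiLp.inner_apply, RCLike.inner_apply, PiLp.toLp_apply, ite_mul, one_mul, zero_mul]
  rw [show (fun s : Fin d => if (s:ℕ) = k then conj (w s) else 0)
    = fun s : Fin d => if s = (⟨k, h⟩ : Fin d) then conj (w s) else 0 from ?_]
  · simp
  · funext s; congr 1; simp [Fin.ext_iff]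

section main
variable (d : ℕ)

lemma h0 (hd : 2 ≤ d) : (0:ℕ) < d := by omega
lemma h1 (hd : 2 ≤ d) : d - 1 < d := by omega

lemma vandd_zero : vandd d 0 = firstd d := by
  ext s
  simp only [vandd, firstd, PiLp.toLp_apply]
  rcases Nat.eq_zero_or_pos (s : ℕ) with h | h
  · simp [h]
  · rw [if_neg (by omega), zero_pow (by omega)]

/-- the antisymmetric part lies in the Parthasarathy space -/
lemma w_mem (a : ℂ) :
    a • tpdd d (lastd d) (firstd d) - a • tpdd d (firstd d) (lastd d) ∈ SPdd d := by
  set w := a • tpdd d (lastd d) (firstd d) - a • tpdd d (firstd d) (lastd d) with hw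
  have key : ∀ u : EuclideanSpace ℂ (Fin d), ⟪tpdd d u u, w⟫_ℂ = 0 := by
    intro u
    rw [hw, inner_sub_right, inner_smul_right, inner_smul_right,
      inner_tpdd, inner_tpdd]
    ring
  rw [SPdd, Submodule.mem_orthogonal]
  intro x hx
  induction hx using Submodule.span_induction with
  | mem x hx =>
    rcases hx with h | ⟨lam, rfl⟩
    · rw [h]; exact key (lastd d)
    · exact key (vandd d lam)
  | zero => simp
  | add x y _ _ hx hy => rw [inner_add_left, hx, hy, add_zero]
  | smul c x _ hx => rw [inner_smul_left, hx, mul_zero]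

lemma xi_decomp (a : ℂ) :
    tpdd d (firstd d + a • lastd d) (firstd d - a • lastd d)
      = (a • tpdd d (lastd d) (firstd d) - a • tpdd d (firstd d) (lastd d))
        + zdd d 0 + (-(a^2)) • zddinf d := by
  ext p
  simp only [tpdd, zdd, zddinf, vandd_zero, PiLp.toLp_apply, PiLp.add_apply, PiLp.sub_apply,
    PiLp.smul_apply, smul_eq_mul]
  ring

lemma xi_mem (a : ℂ) :
    tpdd d (firstd d + a • lastd d) (firstd d - a • lastd d) ∈ SP0inf d := by
  rw [xi_decomp d a, SP0inf]
  refine Submodule.add_mem _ (Submodule.add_mem _ ?_ ?_) ?_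
  · exact Submodule.mem_sup_left (Submodule.mem_sup_left (w_mem d a))
  · exact Submodule.mem_sup_left (Submodule.mem_sup_right
      (Submodule.mem_span_singleton_self _))
  · exact Submodule.mem_sup_right
      (Submodule.smul_mem _ _ (Submodule.mem_span_singleton_self _))

lemma xi_apply00 (hd : 2 ≤ d) (a : ℂ) :
    tpdd d (firstd d + a • lastd d) (firstd d - a • lastd d)
      (⟨0, h0 d hd⟩, ⟨0, h0 d hd⟩) = 1 := by
  simp only [tpdd, firstd, lastd, PiLp.toLp_apply, PiLp.add_apply, PiLp.sub_apply, PiLp.smul_apply,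
    smul_eq_mul]
  rw [if_neg (show ¬((0:ℕ) = d - 1) by omega)]
  norm_num

lemma xi_apply01 (hd : 2 ≤ d) (a : ℂ) :
    tpdd d (firstd d + a • lastd d) (firstd d - a • lastd d)
      (⟨0, h0 d hd⟩, ⟨d - 1, h1 d hd⟩) = -a := by
  simp only [tpdd, firstd, lastd, PiLp.toLp_apply, PiLp.add_apply, PiLp.sub_apply, PiLp.smul_apply,
    smul_eq_mul]
  rw [if_neg (show ¬((0:ℕ) = d - 1) by omega), if_neg (show ¬(d - 1 = 0) by omega)]
  norm_num

end main

theorem statement17 (d : ℕ) (hd : 2 ≤ d) :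
    (∀ a : ℂ, tpdd d (firstd d + a • lastd d) (firstd d - a • lastd d) ∈ SP0inf d) ∧
    (prodLinesdd d (SP0inf d)).Infinite := by
  refine ⟨fun a => xi_mem d a, ?_⟩
  set ξ : ℂ → Hdd d := fun a => tpdd d (firstd d + a • lastd d) (firstd d - a • lastd d)
    with hξ
  have hne : ∀ a, ξ a ≠ 0 := by
    intro a h
    have := congrFun (congrArg WithLp.ofLp h) ((⟨0, h0 d hd⟩ : Fin d), (⟨0, h0 d hd⟩ : Fin d))
    rw [hξ] at this
    simp only [xi_apply00 d hd a] at this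
    exact one_ne_zero this
  apply Set.infinite_of_injective_forall_mem
    (f := fun a : ℂ => Submodule.span ℂ {ξ a})
  · intro a b hab
    simp only at hab
    have hmem : ξ a ∈ Submodule.span ℂ {ξ b} := by
      rw [← hab]; exact Submodule.mem_span_singleton_self _
    rcases Submodule.mem_span_singleton.mp hmem with ⟨c, hc⟩
    have h00 := congrFun (congrArg WithLp.ofLp hc) ((⟨0, h0 d hd⟩ : Fin d), (⟨0, h0 d hd⟩ : Fin d))
    have h01 := congrFun (congrArg WithLp.ofLp hc) ((⟨0, h0 d hd⟩ : Fin d), (⟨d - 1, h1 d hd⟩ : Fin d))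
    rw [hξ] at h00 h01
    simp only [PiLp.smul_apply, smul_eq_mul, xi_apply00 d hd, xi_apply01 d hd] at h00 h01
    rw [mul_one] at h00
    rw [h00, one_mul] at h01
    exact (neg_inj.mp h01).symm
  · intro a
    exact ⟨ξ a, hne a, xi_mem d a, ⟨_, _, rfl⟩, rfl⟩
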